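/- Let k be an algebraically closed field of characteristic 2, K a function field of one variable over k, v a place of K, f ∈ H, and a, b, c, d ∈ K with a·d ≠ b·c. Set g := (a⁴·f + b⁴)/(c⁴·f + d⁴) ∈ H. Then f is pseudo-tame at v if and only if g is pseudo-tame at v. (Pseudo-tameness at a place is invariant under the action of Γ = PGL₂(K⁴).) -/

import Mathlib

/-- A place of a function field `K` over `k`. -/
structure Place (k K : Type*) [Field k] [Field K] [Algebra k K] where
  v : K → ℤ
  v_mul : ∀ x y : K, x ≠ 0 → y ≠ 0 → v (x * y) = v x + v y
  v_add : ∀ x y : K, x ≠ 0 → y ≠ 0 → x + y ≠ 0 → min (v x) (v y) ≤ v (x + y)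
  v_surj : ∀ n : ℤ, ∃ x : K, x ≠ 0 ∧ v x = n
  v_const : ∀ c : k, c ≠ 0 → v (algebraMap k K c) = 0

/-- `K` is a function field of one variable over `k`. -/
def IsFunctionFieldOneVar (k K : Type*) [Field k] [Field K] [Algebra k K] : Prop :=
  ∃ x : K, Transcendental k x ∧
    FiniteDimensional (IntermediateField.adjoin k ({x} : Set K)) K

/-- `f ∈ H = K \ K²` is pseudo-tame at a place `v`: setting `t := f - c` (`c` the
residue of `f` at `v`) if `v f ≥ 0`, and `t := 1/f` if `v f < 0`, there is `h` in
the valuation ring `O_v` such that `v (t + h⁴)` is odd. -/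
def PseudoTameAt {k K : Type*} [Field k] [Field K] [Algebra k K]
    (P : Place k K) (f : K) : Prop :=
  ∃ t : K,
    ((0 ≤ P.v f ∧ ∃ c : k, t = f - algebraMap k K c ∧ t ≠ 0 ∧ 0 < P.v t) ∨
      (P.v f < 0 ∧ t = f⁻¹)) ∧
    ∃ h : K, (h = 0 ∨ 0 ≤ P.v h) ∧ t + h ^ 4 ≠ 0 ∧ Odd (P.v (t + h ^ 4))

set_option linter.unusedSectionVars false

section Basic
variable {k K : Type*} [Field k] [Field K] [Algebra k K] (P : Place k K)

lemma PTX_v_one : P.v 1 = 0 := by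
  have h := P.v_mul 1 1 one_ne_zero one_ne_zero
  simp only [mul_one] at h; omega

lemma PTX_v_neg (x : K) (hx : x ≠ 0) : P.v (-x) = P.v x := by
  have h1 : P.v ((-1 : K) * (-1)) = P.v (-1) + P.v (-1) :=
    P.v_mul _ _ (by norm_num) (by norm_num)
  simp only [neg_mul, one_mul, neg_neg] at h1
  rw [PTX_v_one] at h1
  have h2 : P.v (-x) = P.v ((-1 : K) * x) := by ring_nf
  rw [h2, P.v_mul _ _ (by norm_num) hx]; omega

lemma PTX_v_inv (x : K) (hx : x ≠ 0) : P.v x⁻¹ = - P.v x := by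
  have h := P.v_mul x x⁻¹ hx (inv_ne_zero hx)
  rw [mul_inv_cancel₀ hx, PTX_v_one] at h; omega

lemma PTX_v_pow (x : K) (hx : x ≠ 0) (n : ℕ) : P.v (x ^ n) = n * P.v x := by
  induction n with
  | zero => simp [PTX_v_one]
  | succ m ih =>
      rw [pow_succ, P.v_mul _ _ (pow_ne_zero _ hx) hx, ih]
      push_cast; ring

lemma PTX_v_div (x y : K) (hx : x ≠ 0) (hy : y ≠ 0) : P.v (x / y) = P.v x - P.v y := by
  rw [div_eq_mul_inv, P.v_mul _ _ hx (inv_ne_zero hy), PTX_v_inv _ _ hy]; ring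

lemma PTX_v_add_lt (x y : K) (hx : x ≠ 0) (hy : y ≠ 0) (h : P.v x < P.v y) :
    x + y ≠ 0 ∧ P.v (x + y) = P.v x := by
  have hne : x + y ≠ 0 := by
    intro h0
    have : y = -x := by linear_combination h0
    rw [this, PTX_v_neg _ _ hx] at h; omega
  refine ⟨hne, ?_⟩
  have h1 := P.v_add x y hx hy hne
  rw [min_eq_left (le_of_lt h)] at h1
  have h2 := P.v_add (x + y) (-y) hne (neg_ne_zero.mpr hy) (by simpa using hx)
  rw [PTX_v_neg _ _ hy] at h2
  simp only [add_neg_cancel_right] at h2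
  rcases min_le_iff.mp h2 with h3 | h3 <;> omega

lemma PTX_v_add_ne (x y : K) (hx : x ≠ 0) (hy : y ≠ 0) (h : P.v x ≠ P.v y) :
    x + y ≠ 0 ∧ P.v (x + y) = min (P.v x) (P.v y) := by
  rcases lt_or_gt_of_ne h with h' | h'
  · have := PTX_v_add_lt P x y hx hy h'
    rw [min_eq_left (le_of_lt h')]; exact this
  · have := PTX_v_add_lt P y x hy hx h'
    rw [min_eq_right (le_of_lt h'), add_comm]; exact this

lemma PTX_v_sum_ge {ι : Type*} (s : Finset ι) (g : ι → K) (N : ℤ)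
    (hg : ∀ i ∈ s, g i ≠ 0 → N ≤ P.v (g i)) (hs : ∑ i ∈ s, g i ≠ 0) :
    N ≤ P.v (∑ i ∈ s, g i) := by
  classical
  induction s using Finset.induction_on with
  | empty => simp at hs
  | insert a t hnotmem ih =>
      rw [Finset.sum_insert hnotmem] at hs ⊢
      by_cases ha : g a = 0
      · rw [ha, zero_add] at hs ⊢
        exact ih (fun i hi => hg i (Finset.mem_insert_of_mem hi)) hs
      · by_cases ht : ∑ i ∈ t, g i = 0
        · rw [ht, add_zero] at hs ⊢
          exact hg a (Finset.mem_insert_self a t) ha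
        · have h1 := P.v_add (g a) (∑ i ∈ t, g i) ha ht hs
          have h2 := hg a (Finset.mem_insert_self a t) ha
          have h3 := ih (fun i hi => hg i (Finset.mem_insert_of_mem hi)) ht
          rcases le_min_iff.mpr ⟨h2, h3⟩ with h4
          omega

lemma PTX_v_add_pos' (N : ℤ) (x y : K) (hx : x = 0 ∨ N ≤ P.v x) (hy : y = 0 ∨ N ≤ P.v y)
    (hxy : x + y ≠ 0) : N ≤ P.v (x + y) := by
  by_cases hx0 : x = 0
  · subst hx0; rw [zero_add] at hxy ⊢
    rcases hy with rfl | hy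
    · exact absurd rfl hxy
    · exact hy
  by_cases hy0 : y = 0
  · subst hy0; rw [add_zero]; exact hx.resolve_left hx0
  have h := P.v_add x y hx0 hy0 hxy
  exact le_trans (le_min (hx.resolve_left hx0) (hy.resolve_left hy0)) h

end Basic

section QQ
variable {k K : Type*} [Field k] [Field K] [Algebra k K] (P : Place k K) [CharP K 2]

lemma PTX_pow4_add (a b : K) : (a + b) ^ 4 = a ^ 4 + b ^ 4 := by
  haveI : Fact (Nat.Prime 2) := ⟨Nat.prime_two⟩
  calc (a + b) ^ 4 = ((a + b) ^ 2) ^ 2 := by ring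
    _ = (a ^ 2 + b ^ 2) ^ 2 := by rw [add_pow_char]
    _ = a ^ 4 + b ^ 4 := by rw [add_pow_char]; ring

/-- The key auxiliary predicate: `x` admits `h ∈ O_v` with `v (x + h⁴)` odd. -/
def QQ (P : Place k K) (x : K) : Prop :=
  ∃ h : K, (h = 0 ∨ 0 ≤ P.v h) ∧ x + h ^ 4 ≠ 0 ∧ Odd (P.v (x + h ^ 4))

/-- Symmetrized version. -/
def RRv (P : Place k K) (x : K) : Prop := QQ P x ∨ QQ P x⁻¹

lemma QQ_of_odd {x : K} (hx : x ≠ 0) (h : Odd (P.v x)) : QQ P x :=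
  ⟨0, Or.inl rfl, by simpa using hx, by simpa using h⟩

lemma QQ_cases {x : K} (hx : x ≠ 0) (hQ : QQ P x) :
    Odd (P.v x) ∨ ∃ h : K, h ≠ 0 ∧ 0 ≤ P.v h ∧ 4 * P.v h = P.v x ∧ x + h ^ 4 ≠ 0 ∧
      P.v x < P.v (x + h ^ 4) ∧ Odd (P.v (x + h ^ 4)) := by
  obtain ⟨h, hh, hne, hodd⟩ := hQ
  rcases hh with rfl | hvh
  · left; simpa using hodd
  by_cases hh0 : h = 0
  · subst hh0; left; simpa using hodd
  have hh4 : h ^ 4 ≠ 0 := pow_ne_zero _ hh0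
  have hvh4 : P.v (h ^ 4) = 4 * P.v h := by rw [PTX_v_pow _ _ hh0]; push_cast; ring
  rcases lt_trichotomy (4 * P.v h) (P.v x) with hlt | heq | hgt
  · exfalso
    have := PTX_v_add_lt P (h ^ 4) x hh4 hx (by omega)
    rw [add_comm] at this
    rw [this.2, hvh4] at hodd
    rcases hodd with ⟨m, hm⟩; omega
  · right
    refine ⟨h, hh0, hvh, heq, hne, ?_, hodd⟩
    have hmin := P.v_add x (h ^ 4) hx hh4 hne
    have hne' : P.v (x + h ^ 4) ≠ P.v x := by
      intro hc; rw [hc] at hodd; rcases hodd with ⟨m, hm⟩; omega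
    have : min (P.v x) (P.v (h ^ 4)) = P.v x := by rw [hvh4]; omega
    omega
  · left
    have := PTX_v_add_lt P x (h ^ 4) hx hh4 (by omega)
    rw [this.2] at hodd; exact hodd

/-- Master step lemma: if `v z` is odd then `RRv` holds for `z + h'⁴` (any `h'`). -/
lemma QQ_step (z h' : K) (hz : z ≠ 0) (hodd : Odd (P.v z)) (hy : z + h' ^ 4 ≠ 0) :
    RRv P (z + h' ^ 4) := by
  by_cases hh0 : h' = 0
  · subst hh0; left; exact QQ_of_odd P (by simpa using hy) (by simpa using hodd)
  have hh4 : h' ^ 4 ≠ 0 := pow_ne_zero _ hh0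
  have hvh4 : P.v (h' ^ 4) = 4 * P.v h' := by rw [PTX_v_pow _ _ hh0]; push_cast; ring
  rcases le_or_gt 0 (P.v h') with hvh | hvh
  · -- witness h' for z + h'^4
    left
    refine ⟨h', Or.inr hvh, ?_, ?_⟩
    · have : z + h' ^ 4 + h' ^ 4 = z := by
        have h2 : (h' ^ 4 : K) + h' ^ 4 = 0 := by
          have := CharTwo.add_self_eq_zero (R := K) (h' ^ 4); exact this
        linear_combination h2
      rw [this]; exact hz
    · have : z + h' ^ 4 + h' ^ 4 = z := by
        have h2 : (h' ^ 4 : K) + h' ^ 4 = 0 := CharTwo.add_self_eq_zero _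
        linear_combination h2
      rw [this]; exact hodd
  · -- v h' < 0 : compare v z (odd) with 4 v h' (even)
    have hvv : P.v z ≠ P.v (h' ^ 4) := by
      rw [hvh4]; rcases hodd with ⟨m, hm⟩; omega
    rcases lt_or_gt_of_ne hvv with hlt | hgt
    · left
      have := PTX_v_add_lt P z (h' ^ 4) hz hh4 hlt
      exact QQ_of_odd P hy (by rw [this.2]; exact hodd)
    · -- v(z + h'^4) = 4 v h' ; witness h'⁻¹ for the inverse
      right
      have hmin := PTX_v_add_lt P (h' ^ 4) z hh4 hz hgt
      have hvy : P.v (z + h' ^ 4) = 4 * P.v h' := by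
        rw [add_comm z]; rw [hmin.2, hvh4]
      refine ⟨h'⁻¹, Or.inr (by rw [PTX_v_inv _ _ hh0]; omega), ?_, ?_⟩
      · have hid : (z + h' ^ 4)⁻¹ + (h'⁻¹) ^ 4 = z / ((z + h' ^ 4) * h' ^ 4) := by
          have h2 : (2 : K) = 0 := CharTwo.two_eq_zero
          field_simp
          linear_combination (h' ^ 4) * h2
        rw [hid]
        exact div_ne_zero hz (mul_ne_zero hy hh4)
      · have hid : (z + h' ^ 4)⁻¹ + (h'⁻¹) ^ 4 = z / ((z + h' ^ 4) * h' ^ 4) := by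
          have h2 : (2 : K) = 0 := CharTwo.two_eq_zero
          field_simp
          linear_combination (h' ^ 4) * h2
        rw [hid, PTX_v_div _ _ _ hz (mul_ne_zero hy hh4),
          P.v_mul _ _ hy hh4, hvy, hvh4]
        rcases hodd with ⟨m, hm⟩
        exact ⟨m - 4 * P.v h', by omega⟩

lemma QQ_scale (e x : K) (he : e ≠ 0) (hx : x ≠ 0) (hQ : QQ P x) : RRv P (e ^ 4 * x) := by
  have hex : e ^ 4 * x ≠ 0 := mul_ne_zero (pow_ne_zero _ he) hx
  have hvex : P.v (e ^ 4 * x) = 4 * P.v e + P.v x := by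
    rw [P.v_mul _ _ (pow_ne_zero _ he) hx, PTX_v_pow _ _ he]; push_cast; ring
  rcases QQ_cases P hx hQ with hodd | ⟨h, hh0, hvh, hveq, hne, hlt, hodd⟩
  · left
    refine QQ_of_odd P hex ?_
    rw [hvex]; rcases hodd with ⟨m, hm⟩; exact ⟨2 * P.v e + m, by omega⟩
  · have h2 : (2 : K) = 0 := CharTwo.two_eq_zero
    have hkey : e ^ 4 * (x + h ^ 4) + (e * h) ^ 4 = e ^ 4 * x := by
      linear_combination (e ^ 4 * h ^ 4) * h2
    have hz : e ^ 4 * (x + h ^ 4) ≠ 0 := mul_ne_zero (pow_ne_zero _ he) hne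
    have hoddz : Odd (P.v (e ^ 4 * (x + h ^ 4))) := by
      rw [P.v_mul _ _ (pow_ne_zero _ he) hne, PTX_v_pow _ _ he]
      rcases hodd with ⟨m, hm⟩; exact ⟨2 * P.v e + m, by push_cast; omega⟩
    have := QQ_step P (e ^ 4 * (x + h ^ 4)) (e * h) hz hoddz (by rw [hkey]; exact hex)
    rwa [hkey] at this

lemma QQ_trans (u x : K) (hx : x ≠ 0) (hxu : x + u ^ 4 ≠ 0) (hQ : QQ P x) :
    RRv P (x + u ^ 4) := by
  rcases QQ_cases P hx hQ with hodd | ⟨h, hh0, hvh, hveq, hne, hlt, hodd⟩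
  · exact QQ_step P x u hx hodd hxu
  · have h2 : (2 : K) = 0 := CharTwo.two_eq_zero
    have hkey : (x + h ^ 4) + (h + u) ^ 4 = x + u ^ 4 := by
      linear_combination (h ^ 4 + 2 * h ^ 3 * u + 3 * h ^ 2 * u ^ 2 + 2 * h * u ^ 3) * h2
    have := QQ_step P (x + h ^ 4) (h + u) hne hodd (by rw [hkey]; exact hxu)
    rwa [hkey] at this

lemma QQ_inv_trans (u x : K) (hx : x ≠ 0) (hxu : x + u ^ 4 ≠ 0) (hQ : QQ P x⁻¹) :
    RRv P (x + u ^ 4) := by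
  have hxi : x⁻¹ ≠ 0 := inv_ne_zero hx
  rcases QQ_cases P hxi hQ with hodd | ⟨h, hh0, hvh, hveq, hne, hlt, hodd⟩
  · have hoddx : Odd (P.v x) := by
      rw [PTX_v_inv _ _ hx] at hodd
      rcases hodd with ⟨m, hm⟩; exact ⟨-m - 1, by omega⟩
    exact QQ_step P x u hx hoddx hxu
  · have h2 : (2 : K) = 0 := CharTwo.two_eq_zero
    have hh4 : h ^ 4 ≠ 0 := pow_ne_zero _ hh0
    have key1 : x + (h⁻¹) ^ 4 = x * (x⁻¹ + h ^ 4) / h ^ 4 := by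
      field_simp; ring
    have hz : x + (h⁻¹) ^ 4 ≠ 0 := by
      rw [key1]; exact div_ne_zero (mul_ne_zero hx hne) hh4
    have hvx : P.v x = -(4 * P.v h) := by
      have := PTX_v_inv P x hx; omega
    have hoddz : Odd (P.v (x + (h⁻¹) ^ 4)) := by
      rw [key1, PTX_v_div _ _ _ (mul_ne_zero hx hne) hh4, P.v_mul _ _ hx hne,
        PTX_v_pow _ _ hh0]
      rcases hodd with ⟨m, hm⟩
      refine ⟨m - 4 * P.v h, by push_cast; omega⟩
    have key2 : (x + (h⁻¹) ^ 4) + (u + h⁻¹) ^ 4 = x + u ^ 4 := by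
      linear_combination ((h⁻¹) ^ 4 + 2 * u ^ 3 * h⁻¹ + 3 * u ^ 2 * (h⁻¹) ^ 2
        + 2 * u * (h⁻¹) ^ 3) * h2
    have := QQ_step P (x + (h⁻¹) ^ 4) (u + h⁻¹) hz hoddz (by rw [key2]; exact hxu)
    rwa [key2] at this

lemma RRv_inv (x : K) (h : RRv P x) : RRv P x⁻¹ := by
  rcases h with h | h
  · right; rwa [inv_inv]
  · left; exact h

lemma RRv_scale (e x : K) (he : e ≠ 0) (hx : x ≠ 0) (h : RRv P x) : RRv P (e ^ 4 * x) := by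
  rcases h with h | h
  · exact QQ_scale P e x he hx h
  · have h2 := QQ_scale P e⁻¹ x⁻¹ (inv_ne_zero he) (inv_ne_zero hx) h
    have he' : (e⁻¹) ^ 4 * x⁻¹ = (e ^ 4 * x)⁻¹ := by
      rw [mul_inv, inv_pow]
    rw [he'] at h2
    have := RRv_inv P _ h2
    rwa [inv_inv] at this

lemma RRv_trans (u x : K) (hx : x ≠ 0) (hxu : x + u ^ 4 ≠ 0) (h : RRv P x) :
    RRv P (x + u ^ 4) := by
  rcases h with h | h
  · exact QQ_trans P u x hx hxu h
  · exact QQ_inv_trans P u x hx hxu h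

end QQ

section Residue
open Polynomial IntermediateField
variable {k K : Type*} [Field k] [Field K] [Algebra k K] (P : Place k K) [IsAlgClosed k]

lemma PTX_prod_units (x : K) (hx : ∀ c : k, x - algebraMap k K c ≠ 0 ∧ P.v (x - algebraMap k K c) = 0)
    (m : Multiset k) :
    (m.map fun a => x - algebraMap k K a).prod ≠ 0 ∧ P.v (m.map fun a => x - algebraMap k K a).prod = 0 := by
  induction m using Multiset.induction_on with
  | empty => simpa using PTX_v_one P
  | cons a t ih =>
      rw [Multiset.map_cons, Multiset.prod_cons]
      constructor
      · exact mul_ne_zero (hx a).1 ih.1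
      · rw [P.v_mul _ _ (hx a).1 ih.1, (hx a).2, ih.2]; ring

lemma PTX_aeval_unit (x : K)
    (hx : ∀ c : k, x - algebraMap k K c ≠ 0 ∧ P.v (x - algebraMap k K c) = 0)
    (p : k[X]) (hp : p ≠ 0) : aeval x p ≠ 0 ∧ P.v (aeval x p) = 0 := by
  have hsplit : Splits p := IsAlgClosed.splits p
  have hfact := hsplit.eq_prod_roots
  have hlc : p.leadingCoeff ≠ 0 := leadingCoeff_ne_zero.mpr hp
  have heval : aeval x p
      = algebraMap k K p.leadingCoeff * (p.roots.map fun a => x - algebraMap k K a).prod := by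
    conv_lhs => rw [hfact]
    rw [map_mul, aeval_C, map_multiset_prod, Multiset.map_map]
    congr 2
    rw [Multiset.map_congr rfl]
    intro a _
    simp
  have hprod := PTX_prod_units P x hx p.roots
  have hlc' : algebraMap k K p.leadingCoeff ≠ 0 := by
    simpa using (map_ne_zero_iff _ (algebraMap k K).injective).mpr hlc
  rw [heval]
  refine ⟨mul_ne_zero hlc' hprod.1, ?_⟩
  rw [P.v_mul _ _ hlc' hprod.1, P.v_const _ hlc, hprod.2]; ring

lemma PTX_exists_linear (x : K) (p : k[X]) (hp0 : aeval x p ≠ 0) (hv : P.v (aeval x p) ≠ 0) :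
    ∃ c : k, x - algebraMap k K c ≠ 0 ∧ P.v (x - algebraMap k K c) ≠ 0 := by
  by_contra hno
  push_neg at hno
  by_cases hxc : ∃ c : k, x = algebraMap k K c
  · obtain ⟨c, rfl⟩ := hxc
    rw [aeval_algebraMap_apply] at hp0 hv
    have : (aeval c) p ≠ 0 := by
      intro h; rw [h] at hp0; simp at hp0
    exact hv (P.v_const _ this)
  · push_neg at hxc
    have hx : ∀ c : k, x - algebraMap k K c ≠ 0 ∧ P.v (x - algebraMap k K c) = 0 := by
      intro c
      have hne : x - algebraMap k K c ≠ 0 := sub_ne_zero.mpr (hxc c)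
      exact ⟨hne, hno c hne⟩
    have hp : p ≠ 0 := by rintro rfl; simp at hp0
    exact hv (PTX_aeval_unit P x hx p hp).2

lemma PTX_not_triv (x₀ : K) (hfd : FiniteDimensional (adjoin k ({x₀} : Set K)) K) :
    ¬ (∀ w : K, w ∈ adjoin k ({x₀} : Set K) → w ≠ 0 → P.v w = 0) := by
  intro htriv
  obtain ⟨z, hz, hvz⟩ := P.v_surj (-1)
  set F := adjoin k ({x₀} : Set K)
  set n := Module.finrank F K with hn
  have hni : ¬ LinearIndependent F (fun i : Fin (n + 1) => z ^ (i : ℕ)) := by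
    intro hli
    have := hli.fintype_card_le_finrank
    rw [Fintype.card_fin] at this
    omega
  obtain ⟨g, hsum, i₀, hgi⟩ := Fintype.not_linearIndependent_iff.mp hni
  classical
  set s : Finset (Fin (n + 1)) := Finset.univ.filter (fun i => g i ≠ 0) with hsdef
  have hsne : s.Nonempty := ⟨i₀, by simp [hsdef, hgi]⟩
  set j := s.max' hsne with hjdef
  have hj : g j ≠ 0 := by
    have := s.max'_mem hsne
    simp only [hsdef, Finset.mem_filter] at this
    exact this.2
  have hmax : ∀ i, g i ≠ 0 → i ≤ j := fun i hi => s.le_max' i (by simp [hsdef, hi])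
  have hsm : ∀ (w : F) (y : K), w • y = (↑w : K) * y := fun w y => by
    rw [Algebra.smul_def]; rfl
  simp only [hsm] at hsum
  have hsplit : (↑(g j) : K) * z ^ (j : ℕ)
      + ∑ i ∈ Finset.univ.erase j, (↑(g i) : K) * z ^ (i : ℕ) = 0 :=
    (Finset.add_sum_erase Finset.univ (fun i => (↑(g i) : K) * z ^ (i : ℕ))
      (Finset.mem_univ j)).trans hsum
  have hgj : (↑(g j) : K) ≠ 0 := fun h => hj (by exact_mod_cast h)
  have hterm : (↑(g j) : K) * z ^ (j : ℕ) ≠ 0 :=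
    mul_ne_zero hgj (pow_ne_zero _ hz)
  have hS : ∑ i ∈ Finset.univ.erase j, (↑(g i) : K) * z ^ (i : ℕ) = -((↑(g j) : K) * z ^ (j : ℕ)) := by
    linear_combination hsplit
  have hSne : ∑ i ∈ Finset.univ.erase j, (↑(g i) : K) * z ^ (i : ℕ) ≠ 0 := by
    rw [hS]; exact neg_ne_zero.mpr hterm
  have hvterm : P.v ((↑(g j) : K) * z ^ (j : ℕ)) = -(j : ℕ) := by
    rw [P.v_mul _ _ hgj (pow_ne_zero _ hz), htriv _ (g j).2 hgj, PTX_v_pow _ _ hz, hvz]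
    ring
  have hbound := PTX_v_sum_ge P (Finset.univ.erase j)
    (fun i => (↑(g i) : K) * z ^ (i : ℕ)) (-(j : ℕ) + 1) ?_ hSne
  · rw [hS, PTX_v_neg _ _ hterm, hvterm] at hbound
    omega
  · intro i hi hne
    have hgi' : (↑(g i) : K) ≠ 0 := by
      intro h
      apply hne
      show (↑(g i) : K) * z ^ (i : ℕ) = 0
      rw [h, zero_mul]
    have hgi'' : g i ≠ 0 := fun h => hgi' (by rw [h]; rfl)
    have hij : i ≠ j := (Finset.mem_erase.mp hi).1
    have hle : i ≤ j := hmax i hgi''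
    have hlt : (i : ℕ) < (j : ℕ) := lt_of_le_of_ne (by exact_mod_cast hle) (fun h => hij (Fin.ext h))
    rw [P.v_mul _ _ hgi' (pow_ne_zero _ hz), htriv _ (g i).2 hgi', PTX_v_pow _ _ hz, hvz]
    omega

lemma PTX_exists_y (hK : IsFunctionFieldOneVar k K) :
    ∃ y : K, y ≠ 0 ∧ 0 < P.v y ∧ Transcendental k y ∧
      FiniteDimensional (adjoin k ({y} : Set K)) K := by
  obtain ⟨x₀, ht, hfd⟩ := hK
  have hnt := PTX_not_triv P x₀ hfd
  push_neg at hnt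
  obtain ⟨w, hwF, hw0, hvw⟩ := hnt
  rw [mem_adjoin_simple_iff] at hwF
  obtain ⟨r, s, hw⟩ := hwF
  have hsa : aeval x₀ s ≠ 0 := by
    intro h; rw [h, div_zero] at hw; exact hw0 hw
  have hra : aeval x₀ r ≠ 0 := by
    intro h; rw [h, zero_div] at hw; exact hw0 hw
  have hvrs : P.v w = P.v (aeval x₀ r) - P.v (aeval x₀ s) := by
    rw [hw]; exact PTX_v_div P _ _ hra hsa
  obtain ⟨p, hpa, hpv⟩ : ∃ p : k[X], aeval x₀ p ≠ 0 ∧ P.v (aeval x₀ p) ≠ 0 := by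
    by_cases h : P.v (aeval x₀ r) = 0
    · exact ⟨s, hsa, by omega⟩
    · exact ⟨r, hra, h⟩
  obtain ⟨c, hc0, hcv⟩ := PTX_exists_linear P x₀ p hpa hpv
  set w₀ := x₀ - algebraMap k K c with hw₀
  have htw : Transcendental k w₀ := by
    have h1 : w₀ = aeval x₀ (X - C c) := by rw [hw₀]; simp
    rw [h1]
    exact ht.aeval (X - C c) (by simp)
      (by rw [Polynomial.leadingCoeff_X_sub_C]; exact one_mem _)
  have hadj : adjoin k ({w₀} : Set K) = adjoin k ({x₀} : Set K) := by
    apply le_antisymm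
    · rw [adjoin_le_iff]
      intro tt httmem
      rw [Set.mem_singleton_iff] at httmem
      rw [httmem, hw₀]
      exact sub_mem (mem_adjoin_simple_self k x₀) (IntermediateField.algebraMap_mem _ c)
    · rw [adjoin_le_iff]
      intro tt httmem
      rw [Set.mem_singleton_iff] at httmem
      have hx0 : x₀ = w₀ + algebraMap k K c := by rw [hw₀]; ring
      rw [httmem, hx0]
      exact add_mem (mem_adjoin_simple_self k w₀) (IntermediateField.algebraMap_mem _ c)
  rcases lt_or_gt_of_ne hcv with hneg | hpos
  · refine ⟨w₀⁻¹, inv_ne_zero hc0, ?_, ?_, ?_⟩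
    · rw [PTX_v_inv _ _ hc0]; omega
    · intro halg
      exact htw (IsAlgebraic.inv_iff.mp halg)
    · have hadj2 : adjoin k ({w₀⁻¹} : Set K) = adjoin k ({w₀} : Set K) := by
        apply le_antisymm
        · rw [adjoin_le_iff]
          intro tt httmem
          rw [Set.mem_singleton_iff] at httmem
          rw [httmem]
          exact inv_mem (mem_adjoin_simple_self k w₀)
        · rw [adjoin_le_iff]
          intro tt httmem
          rw [Set.mem_singleton_iff] at httmem
          rw [httmem]
          have h5 := inv_mem (mem_adjoin_simple_self k w₀⁻¹)
          rwa [inv_inv] at h5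
      rw [hadj2, hadj]; exact hfd
  · refine ⟨w₀, hc0, hpos, htw, ?_⟩
    rw [hadj]; exact hfd

lemma PTX_aeval_nonneg (y : K) (hy0 : y ≠ 0) (hvy : 0 < P.v y) (p : k[X])
    (hp : aeval y p ≠ 0) : 0 ≤ P.v (aeval y p) := by
  rw [aeval_eq_sum_range] at hp ⊢
  refine PTX_v_sum_ge P _ _ 0 ?_ hp
  intro i _ hne
  have hc : p.coeff i ≠ 0 := by
    intro h; apply hne; rw [h, zero_smul]
  have hcK : algebraMap k K (p.coeff i) ≠ 0 :=
    (map_ne_zero_iff _ (algebraMap k K).injective).mpr hc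
  rw [Algebra.smul_def, P.v_mul _ _ hcK (pow_ne_zero _ hy0), P.v_const _ hc,
    PTX_v_pow _ _ hy0]
  have : (0:ℤ) ≤ (i : ℤ) * P.v y := mul_nonneg (by positivity) (le_of_lt hvy)
  omega

lemma PTX_aeval_residue (y : K) (hy0 : y ≠ 0) (hvy : 0 < P.v y) (p : k[X]) :
    aeval y p - algebraMap k K (p.coeff 0) = 0 ∨
      (aeval y p - algebraMap k K (p.coeff 0) ≠ 0 ∧
        0 < P.v (aeval y p - algebraMap k K (p.coeff 0))) := by
  have hdx : aeval y p - algebraMap k K (p.coeff 0) = y * aeval y p.divX := by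
    have h0 := Polynomial.divX_mul_X_add p
    calc aeval y p - algebraMap k K (p.coeff 0)
        = aeval y (p.divX * X + C (p.coeff 0)) - algebraMap k K (p.coeff 0) := by rw [h0]
      _ = y * aeval y p.divX := by rw [map_add, map_mul, aeval_X, aeval_C]; ring
  by_cases h : aeval y p.divX = 0
  · left; rw [hdx, h, mul_zero]
  · right
    refine ⟨by rw [hdx]; exact mul_ne_zero hy0 h, ?_⟩
    rw [hdx, P.v_mul _ _ hy0 h]
    have := PTX_aeval_nonneg P y hy0 hvy p.divX h
    omega

lemma PTX_aeval_unit_const (y : K) (hy0 : y ≠ 0) (hvy : 0 < P.v y) (p : k[X])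
    (hc : p.coeff 0 ≠ 0) : aeval y p ≠ 0 ∧ P.v (aeval y p) = 0 := by
  have hcK : algebraMap k K (p.coeff 0) ≠ 0 :=
    (map_ne_zero_iff _ (algebraMap k K).injective).mpr hc
  rcases PTX_aeval_residue P y hy0 hvy p with h | ⟨hne, hpos⟩
  · have heq : aeval y p = algebraMap k K (p.coeff 0) := by linear_combination h
    rw [heq]; exact ⟨hcK, P.v_const _ hc⟩
  · have hsum : aeval y p = algebraMap k K (p.coeff 0)
        + (aeval y p - algebraMap k K (p.coeff 0)) := by ring
    have hlt := PTX_v_add_lt P (algebraMap k K (p.coeff 0))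
      (aeval y p - algebraMap k K (p.coeff 0)) hcK hne
      (by rw [P.v_const _ hc]; omega)
    rw [← hsum] at hlt
    refine ⟨hlt.1, ?_⟩
    rw [hlt.2]
    exact P.v_const _ hc

lemma PTX_factor_X (p : k[X]) (hp : p ≠ 0) :
    ∃ (a : ℕ) (q : k[X]), q.coeff 0 ≠ 0 ∧ p = X ^ a * q := by
  obtain ⟨q, hq, hnd⟩ := p.exists_eq_pow_rootMultiplicity_mul_and_not_dvd hp 0
  refine ⟨p.rootMultiplicity 0, q, ?_, by simpa using hq⟩
  intro h
  exact hnd (by simpa using X_dvd_iff.mpr h)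

lemma PTX_residue_in_adjoin (y : K) (hy0 : y ≠ 0) (hvy : 0 < P.v y)
    (hty : Transcendental k y) (w : K) (hwF : w ∈ adjoin k ({y} : Set K))
    (hw0 : w ≠ 0) (hvw : 0 ≤ P.v w) :
    ∃ c : k, w = algebraMap k K c ∨
      (w - algebraMap k K c ≠ 0 ∧ 0 < P.v (w - algebraMap k K c)) := by
  rw [mem_adjoin_simple_iff] at hwF
  obtain ⟨r, s, hw⟩ := hwF
  have hsa : aeval y s ≠ 0 := by
    intro h; rw [h, div_zero] at hw; exact hw0 hw
  have hra : aeval y r ≠ 0 := by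
    intro h; rw [h, zero_div] at hw; exact hw0 hw
  have hr0 : r ≠ 0 := by rintro rfl; simp at hra
  have hs0 : s ≠ 0 := by rintro rfl; simp at hsa
  obtain ⟨a, r₁, hr₁c, hrfac⟩ := PTX_factor_X r hr0
  obtain ⟨b, s₁, hs₁c, hsfac⟩ := PTX_factor_X s hs0
  have hr₁a : aeval y r₁ ≠ 0 := by
    intro h; apply hra; rw [hrfac]; rw [map_mul, h, mul_zero]
  have hs₁a : aeval y s₁ ≠ 0 := by
    intro h; apply hsa; rw [hsfac]; rw [map_mul, h, mul_zero]
  have hru := PTX_aeval_unit_const P y hy0 hvy r₁ hr₁c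
  have hsu := PTX_aeval_unit_const P y hy0 hvy s₁ hs₁c
  have hwrep : w = y ^ a * aeval y r₁ / (y ^ b * aeval y s₁) := by
    rw [hw, hrfac, hsfac, map_mul, map_mul, map_pow, map_pow, aeval_X]
  have hvw2 : P.v w = ((a : ℤ) - b) * P.v y := by
    rw [hwrep, PTX_v_div _ _ _ (mul_ne_zero (pow_ne_zero _ hy0) hr₁a)
      (mul_ne_zero (pow_ne_zero _ hy0) hs₁a),
      P.v_mul _ _ (pow_ne_zero _ hy0) hr₁a, P.v_mul _ _ (pow_ne_zero _ hy0) hs₁a,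
      PTX_v_pow _ _ hy0, PTX_v_pow _ _ hy0, hru.2, hsu.2]
    ring
  have hab : (b : ℤ) ≤ a := by
    by_contra hcon
    push_neg at hcon
    have : ((a : ℤ) - b) * P.v y < 0 :=
      mul_neg_of_neg_of_pos (by omega) hvy
    omega
  rcases eq_or_lt_of_le hab with haeq | halt
  · -- unit case : residue is ratio of constant coefficients
    have hane : a = b := by exact_mod_cast haeq.symm
    subst hane
    have hcancel : w = aeval y r₁ / aeval y s₁ := by
      rw [hwrep, mul_div_mul_left _ _ (pow_ne_zero _ hy0)]
    set c : k := r₁.coeff 0 / s₁.coeff 0 with hcdef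
    have hcK : algebraMap k K c
        = algebraMap k K (r₁.coeff 0) / algebraMap k K (s₁.coeff 0) := by
      rw [hcdef, map_div₀]
    have hc2K : algebraMap k K (s₁.coeff 0) ≠ 0 :=
      (map_ne_zero_iff _ (algebraMap k K).injective).mpr hs₁c
    have hc1K : algebraMap k K (r₁.coeff 0) ≠ 0 :=
      (map_ne_zero_iff _ (algebraMap k K).injective).mpr hr₁c
    set A := aeval y r₁ - algebraMap k K (r₁.coeff 0) with hAdef
    set B := aeval y s₁ - algebraMap k K (s₁.coeff 0) with hBdef
    have hid : w - algebraMap k K c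
        = (A * algebraMap k K (s₁.coeff 0) - B * algebraMap k K (r₁.coeff 0))
          / (aeval y s₁ * algebraMap k K (s₁.coeff 0)) := by
      rw [hcancel, hcK, hAdef, hBdef]
      field_simp
      ring
    have hD : aeval y s₁ * algebraMap k K (s₁.coeff 0) ≠ 0 := mul_ne_zero hs₁a hc2K
    by_cases hN : A * algebraMap k K (s₁.coeff 0) - B * algebraMap k K (r₁.coeff 0) = 0
    · refine ⟨c, Or.inl ?_⟩
      have : w - algebraMap k K c = 0 := by rw [hid, hN, zero_div]
      linear_combination this
    · refine ⟨c, Or.inr ⟨?_, ?_⟩⟩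
      · rw [hid]; exact div_ne_zero hN hD
      · rw [hid, PTX_v_div _ _ _ hN hD, P.v_mul _ _ hs₁a hc2K, hsu.2, P.v_const _ hs₁c]
        have hvN : 1 ≤ P.v (A * algebraMap k K (s₁.coeff 0)
            + -(B * algebraMap k K (r₁.coeff 0))) := by
          refine PTX_v_add_pos' P 1 _ _ ?_ ?_ (by rw [← sub_eq_add_neg]; exact hN)
          · rcases PTX_aeval_residue P y hy0 hvy r₁ with h | ⟨hne, hpos⟩
            · left; rw [← hAdef] at h; rw [h, zero_mul]
            · right
              rw [← hAdef] at hne hpos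
              rw [P.v_mul _ _ hne hc2K, P.v_const _ hs₁c]
              omega
          · rcases PTX_aeval_residue P y hy0 hvy s₁ with h | ⟨hne, hpos⟩
            · left; rw [← hBdef] at h; rw [h, zero_mul, neg_zero]
            · right
              rw [← hBdef] at hne hpos
              rw [PTX_v_neg _ _ (mul_ne_zero hne hc1K), P.v_mul _ _ hne hc1K,
                P.v_const _ hr₁c]
              omega
        rw [← sub_eq_add_neg] at hvN
        omega
  · -- zero residue case
    refine ⟨0, Or.inr ⟨by simpa using hw0, ?_⟩⟩
    rw [map_zero, sub_zero, hvw2]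
    exact mul_pos (by omega) hvy

lemma PTX_exists_residue (hK : IsFunctionFieldOneVar k K) (x : K) (hx0 : x ≠ 0)
    (hvx : 0 ≤ P.v x) :
    ∃ c : k, x = algebraMap k K c ∨
      (x - algebraMap k K c ≠ 0 ∧ 0 < P.v (x - algebraMap k K c)) := by
  obtain ⟨y, hy0, hvy, hty, hfd⟩ := PTX_exists_y P hK
  rcases lt_or_eq_of_le hvx with hpos | hzero
  · exact ⟨0, Or.inr ⟨by simpa using hx0, by simpa using hpos⟩⟩
  by_contra hno
  push_neg at hno
  have hall : ∀ c : k, x - algebraMap k K c ≠ 0 ∧ P.v (x - algebraMap k K c) = 0 := by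
    intro c
    have hne : x - algebraMap k K c ≠ 0 := sub_ne_zero.mpr (hno c).1
    refine ⟨hne, le_antisymm ((hno c).2 hne) ?_⟩
    by_cases hc : c = 0
    · subst hc; rw [map_zero, sub_zero]; omega
    · have hcK : algebraMap k K c ≠ 0 :=
        (map_ne_zero_iff _ (algebraMap k K).injective).mpr hc
      have hmin := P.v_add x (-algebraMap k K c) hx0 (neg_ne_zero.mpr hcK)
        (by rw [← sub_eq_add_neg]; exact hne)
      rw [← sub_eq_add_neg, PTX_v_neg _ _ hcK, P.v_const _ hc] at hmin
      omega
  classical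
  set F := adjoin k ({y} : Set K) with hF
  haveI := hfd
  set n := Module.finrank F K with hn
  have hni : ¬ LinearIndependent F (fun i : Fin (n + 1) => x ^ (i : ℕ)) := by
    intro hli
    have := hli.fintype_card_le_finrank
    rw [Fintype.card_fin] at this
    omega
  obtain ⟨g, hsum, i₀, hgi⟩ := Fintype.not_linearIndependent_iff.mp hni
  have hsm : ∀ (w : F) (z : K), w • z = (↑w : K) * z := fun w z => by
    rw [Algebra.smul_def]; rfl
  simp only [hsm] at hsum
  set sfin : Finset (Fin (n + 1)) := Finset.univ.filter (fun i => g i ≠ 0) with hsdef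
  have hsne : sfin.Nonempty := ⟨i₀, by simp [hsdef, hgi]⟩
  obtain ⟨j, hjs, hjmin⟩ := sfin.exists_min_image (fun i => P.v (↑(g i) : K)) hsne
  have hgj : g j ≠ 0 := (Finset.mem_filter.mp hjs).2
  have hgjK : (↑(g j) : K) ≠ 0 := fun h => hgj (by exact_mod_cast h)
  set si : Fin (n + 1) → K := fun i => (↑(g i) : K) / (↑(g j) : K) with hsidef
  have hsum2 : ∑ i : Fin (n + 1), si i * x ^ (i : ℕ) = 0 := by
    have h1 : ∑ i : Fin (n + 1), ((↑(g i) : K) * x ^ (i : ℕ)) / (↑(g j) : K) = 0 := by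
      rw [← Finset.sum_div, hsum, zero_div]
    rw [← h1]
    apply Finset.sum_congr rfl
    intro i _
    rw [hsidef]
    ring
  have hres : ∀ i : Fin (n + 1), g i ≠ 0 → ∃ c : k, si i = algebraMap k K c ∨
      (si i - algebraMap k K c ≠ 0 ∧ 0 < P.v (si i - algebraMap k K c)) := by
    intro i hi
    have hiK : (↑(g i) : K) ≠ 0 := fun h => hi (by exact_mod_cast h)
    refine PTX_residue_in_adjoin P y hy0 hvy hty (si i) ?_ (div_ne_zero hiK hgjK) ?_
    · exact F.div_mem (g i).2 (g j).2
    · rw [hsidef]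
      simp only
      rw [PTX_v_div _ _ _ hiK hgjK]
      have := hjmin i (by simp [hsdef, hi])
      omega
  set c : Fin (n + 1) → k := fun i => if hi : g i ≠ 0 then (hres i hi).choose else 0
    with hcdef
  have hcj : algebraMap k K (c j) = 1 := by
    have hsj : si j = 1 := div_self hgjK
    have hcjeq : c j = (hres j hgj).choose := by rw [hcdef]; simp [hgj]
    have hspec := (hres j hgj).choose_spec
    rw [← hcjeq] at hspec
    rw [hsj] at hspec
    rcases hspec with h | ⟨hne, hpos⟩
    · rw [← h]
    · exfalso
      have h1 : (1 : K) - algebraMap k K (c j) = algebraMap k K (1 - c j) := by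
        rw [map_sub, map_one]
      have h2 : (1 : k) - c j ≠ 0 := by
        intro h3
        rw [h1, h3, map_zero] at hne
        exact hne rfl
      rw [h1, P.v_const _ h2] at hpos
      omega
  set Q : k[X] := ∑ i : Fin (n + 1), C (c i) * X ^ (i : ℕ) with hQdef
  have hQj : Q.coeff (j : ℕ) = c j := by
    rw [hQdef, finset_sum_coeff]
    have : ∀ i : Fin (n + 1), (C (c i) * X ^ (i : ℕ)).coeff (j : ℕ)
        = if i = j then c i else 0 := by
      intro i
      rw [coeff_C_mul, coeff_X_pow]
      by_cases h : i = j
      · subst h; simp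
      · have : (j : ℕ) ≠ (i : ℕ) := fun hc => h (Fin.ext hc.symm)
        simp [h, this]
    rw [Finset.sum_congr rfl (fun i _ => this i), Finset.sum_ite_eq' Finset.univ j]
    simp
  have hcj' : c j ≠ 0 := by
    intro h
    rw [h, map_zero] at hcj
    exact one_ne_zero hcj.symm
  have hQ0 : Q ≠ 0 := fun h => hcj' (by rw [← hQj, h, coeff_zero])
  have hQx := PTX_aeval_unit P x hall Q hQ0
  have haQ : aeval x Q = ∑ i : Fin (n + 1), algebraMap k K (c i) * x ^ (i : ℕ) := by
    rw [hQdef, map_sum]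
    apply Finset.sum_congr rfl
    intro i _
    rw [map_mul, aeval_C, map_pow, aeval_X]
  have hkey : aeval x Q
      = ∑ i : Fin (n + 1), (algebraMap k K (c i) - si i) * x ^ (i : ℕ) := by
    rw [haQ]
    have : ∑ i : Fin (n + 1), (algebraMap k K (c i) - si i) * x ^ (i : ℕ)
        = ∑ i : Fin (n + 1), algebraMap k K (c i) * x ^ (i : ℕ)
          - ∑ i : Fin (n + 1), si i * x ^ (i : ℕ) := by
      rw [← Finset.sum_sub_distrib]
      apply Finset.sum_congr rfl
      intro i _; ring
    rw [this, hsum2, sub_zero]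
  have hbound : 1 ≤ P.v (aeval x Q) := by
    rw [hkey]
    refine PTX_v_sum_ge P _ _ 1 ?_ (by rw [← hkey]; exact hQx.1)
    intro i _ hne
    have hgine : g i ≠ 0 := by
      intro h
      apply hne
      have hsi0 : si i = 0 := by rw [hsidef]; simp [h]
      have hci0 : c i = 0 := by rw [hcdef]; simp [h]
      rw [hsi0, hci0, map_zero, sub_zero, zero_mul]
    have hspec := (hres i hgine).choose_spec
    have hcieq : c i = (hres i hgine).choose := by rw [hcdef]; simp [hgine]
    rcases hspec with h | ⟨hne2, hpos⟩
    · exfalso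
      apply hne
      rw [hcieq, ← h, sub_self, zero_mul]
    · have hdne : algebraMap k K (c i) - si i ≠ 0 := by
        rw [hcieq]
        intro h3
        apply hne2
        linear_combination -h3
      have hvd : 0 < P.v (algebraMap k K (c i) - si i) := by
        have : algebraMap k K (c i) - si i = -(si i - algebraMap k K (c i)) := by ring
        rw [this, PTX_v_neg]
        · rw [hcieq]; exact hpos
        · rw [hcieq]; exact hne2
      rw [P.v_mul _ _ hdne (pow_ne_zero _ hx0), PTX_v_pow _ _ hx0, ← hzero]
      omega
  rw [hQx.2] at hbound
  omega

end Residue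

section Mobius
variable {k K : Type*} [Field k] [Field K] [Algebra k K] (P : Place k K) [CharP K 2]

lemma PTX_sq_inj (x y : K) (h : x ^ 2 = y ^ 2) : x = y := by
  haveI : Fact (Nat.Prime 2) := ⟨Nat.prime_two⟩
  have h1 : (x + y) ^ 2 = 0 := by
    rw [add_pow_char, h]
    exact CharTwo.add_self_eq_zero _
  have h2 : x + y = 0 := by
    exact pow_eq_zero_iff (by norm_num) |>.mp h1
  have h3 : x = -y := by linear_combination h2
  rw [h3, CharTwo.neg_eq]

lemma PTX_QQ_inv_unit (x : K) (hx0 : x ≠ 0) (hv0 : P.v x = 0) (hQ : QQ P x⁻¹) :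
    QQ P x := by
  rcases QQ_cases P (inv_ne_zero hx0) hQ with hodd | ⟨h, hh0, hvh, hveq, hne, hlt, hodd⟩
  · exfalso
    rw [PTX_v_inv _ _ hx0, hv0] at hodd
    rcases hodd with ⟨m, hm⟩; omega
  · have hvxi : P.v x⁻¹ = 0 := by rw [PTX_v_inv _ _ hx0, hv0]; ring
    have hh4 : h ^ 4 ≠ 0 := pow_ne_zero _ hh0
    have key1 : x + (h⁻¹) ^ 4 = x * (x⁻¹ + h ^ 4) / h ^ 4 := by
      field_simp; ring
    refine ⟨h⁻¹, Or.inr (by rw [PTX_v_inv _ _ hh0]; omega), ?_, ?_⟩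
    · rw [key1]; exact div_ne_zero (mul_ne_zero hx0 hne) hh4
    · rw [key1, PTX_v_div _ _ _ (mul_ne_zero hx0 hne) hh4, P.v_mul _ _ hx0 hne,
        PTX_v_pow _ _ hh0, hv0]
      rcases hodd with ⟨m, hm⟩
      exact ⟨m - 2 * P.v h, by push_cast; omega⟩

lemma PTX_H_mobius (f : K) (hf : ∀ y : K, y ^ 2 ≠ f) (a b c d : K)
    (habcd : a * d ≠ b * c) :
    (c ^ 4 * f + d ^ 4 ≠ 0) ∧ (a ^ 4 * f + b ^ 4 ≠ 0) ∧
      ∀ y : K, y ^ 2 ≠ (a ^ 4 * f + b ^ 4) / (c ^ 4 * f + d ^ 4) := by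
  have h2 : (2 : K) = 0 := CharTwo.two_eq_zero
  have hden : c ^ 4 * f + d ^ 4 ≠ 0 := by
    intro h0
    by_cases hc : c = 0
    · rw [hc] at h0
      have hd : d = 0 := pow_eq_zero_iff (n := 4) (by norm_num) |>.mp (by linear_combination h0)
      rw [hc, hd] at habcd; simp at habcd
    · apply hf ((d ^ 2) / (c ^ 2))
      have hc2 : c ^ 2 ≠ 0 := pow_ne_zero _ hc
      field_simp
      linear_combination (-1 : K) * h0 + d ^ 4 * h2
  have hnum : a ^ 4 * f + b ^ 4 ≠ 0 := by
    intro h0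
    by_cases ha : a = 0
    · rw [ha] at h0
      have hb : b = 0 := pow_eq_zero_iff (n := 4) (by norm_num) |>.mp (by linear_combination h0)
      rw [ha, hb] at habcd; simp at habcd
    · apply hf ((b ^ 2) / (a ^ 2))
      have ha2 : a ^ 2 ≠ 0 := pow_ne_zero _ ha
      field_simp
      linear_combination (-1 : K) * h0 + b ^ 4 * h2
  refine ⟨hden, hnum, ?_⟩
  intro y hy
  have hcross : y ^ 2 * (c ^ 4 * f + d ^ 4) = a ^ 4 * f + b ^ 4 := by
    rw [hy, div_mul_cancel₀ _ hden]
  by_cases hca : c ^ 2 * y + a ^ 2 = 0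
  · -- degenerate: forces a*d = b*c
    have hdb : d ^ 2 * y + b ^ 2 = 0 := by
      have hsq : (d ^ 2 * y + b ^ 2) ^ 2 = 0 := by
        linear_combination hcross + (-(f) * (c ^ 2 * y - a ^ 2)) * hca
          + (d ^ 2 * y * b ^ 2 + b ^ 4) * h2
      exact pow_eq_zero_iff (by norm_num) |>.mp hsq
    by_cases hy0 : y = 0
    · rw [hy0] at hca hdb
      have ha : a = 0 := by
        have : a ^ 2 = 0 := by linear_combination hca
        exact pow_eq_zero_iff (by norm_num) |>.mp this
      have hb : b = 0 := by
        have : b ^ 2 = 0 := by linear_combination hdb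
        exact pow_eq_zero_iff (by norm_num) |>.mp this
      rw [ha, hb] at habcd; simp at habcd
    · apply habcd
      apply PTX_sq_inj
      have h5 : (a * d) ^ 2 * y = (b * c) ^ 2 * y := by
        linear_combination (d ^ 2 * y) * hca + (-(c ^ 2) * y) * hdb
          + (- b ^ 2 * c ^ 2 + a^2*d^2) * (0 : K)
      have := mul_right_cancel₀ hy0 h5
      exact this
  · apply hf ((d ^ 2 * y + b ^ 2) / (c ^ 2 * y + a ^ 2))
    rw [div_pow, div_eq_iff (pow_ne_zero _ hca)]
    linear_combination (-1 : K) * hcross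
      + (d ^ 2 * y * b ^ 2 + d ^ 4 * y ^ 2 - y * a ^ 2 * f * c ^ 2 - a ^ 4 * f) * h2

end Mobius

section Mobius2
variable {k K : Type*} [Field k] [Field K] [Algebra k K] (P : Place k K) [CharP K 2]

lemma PTX_RR_mobius (f : K) (hf : ∀ y : K, y ^ 2 ≠ f) (a b c d : K)
    (habcd : a * d ≠ b * c) (hR : RRv P f) :
    RRv P ((a ^ 4 * f + b ^ 4) / (c ^ 4 * f + d ^ 4)) := by
  have h2 : (2 : K) = 0 := CharTwo.two_eq_zero
  have hf0 : f ≠ 0 := by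
    intro h0; exact hf 0 (by rw [h0]; ring)
  obtain ⟨hden, hnum, hg⟩ := PTX_H_mobius f hf a b c d habcd
  by_cases hc : c = 0
  · -- affine case
    have hd : d ≠ 0 := by
      intro h0; rw [hc, h0] at habcd; simp at habcd
    have ha : a ≠ 0 := by
      intro h0; rw [hc, h0] at habcd; simp at habcd
    have had : a / d ≠ 0 := div_ne_zero ha hd
    have hgid : (a / d) ^ 4 * f + (b / d) ^ 4 = (a ^ 4 * f + b ^ 4) / (c ^ 4 * f + d ^ 4) := by
      rw [hc]
      field_simp
      ring
    have h1 : RRv P ((a / d) ^ 4 * f) := RRv_scale P (a / d) f had hf0 hR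
    have h3 : (a / d) ^ 4 * f + (b / d) ^ 4 ≠ 0 := by
      rw [hgid]; exact div_ne_zero hnum hden
    have h4 := RRv_trans P (b / d) ((a / d) ^ 4 * f)
      (mul_ne_zero (pow_ne_zero _ had) hf0) h3 h1
    rwa [hgid] at h4
  · -- generic case
    have hdet : a * d + b * c ≠ 0 := by
      intro h0
      apply habcd
      have : a * d = -(b * c) := by linear_combination h0
      rw [this, CharTwo.neg_eq]
    set e := (a * d + b * c) / c ^ 2 with hedef
    have he : e ≠ 0 := div_ne_zero hdet (pow_ne_zero _ hc)
    have hs1 : f + (d / c) ^ 4 ≠ 0 := by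
      intro h0
      apply hden
      have hc4 : (c : K) ^ 4 ≠ 0 := pow_ne_zero _ hc
      have : c ^ 4 * (f + (d / c) ^ 4) = c ^ 4 * f + d ^ 4 := by
        field_simp
      rw [← this, h0, mul_zero]
    have R1 : RRv P (f + (d / c) ^ 4) := RRv_trans P (d / c) f hf0 hs1 hR
    have R2 : RRv P (f + (d / c) ^ 4)⁻¹ := RRv_inv P _ R1
    have R3 : RRv P (e ^ 4 * (f + (d / c) ^ 4)⁻¹) :=
      RRv_scale P e _ he (inv_ne_zero hs1) R2
    have hx3 : e ^ 4 * (f + (d / c) ^ 4)⁻¹ ≠ 0 :=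
      mul_ne_zero (pow_ne_zero _ he) (inv_ne_zero hs1)
    have hgid : e ^ 4 * (f + (d / c) ^ 4)⁻¹ + (a / c) ^ 4
        = (a ^ 4 * f + b ^ 4) / (c ^ 4 * f + d ^ 4) := by
      have hc4 : (c : K) ^ 4 ≠ 0 := pow_ne_zero _ hc
      have hrepr : f + (d / c) ^ 4 = (c ^ 4 * f + d ^ 4) / c ^ 4 := by
        field_simp
      rw [hedef, hrepr, inv_div]
      field_simp
      linear_combination (2 * a * d * b ^ 3 * c ^ 3 + 3 * a ^ 2 * d ^ 2 * b ^ 2 * c ^ 2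
        + 2 * a ^ 3 * d ^ 3 * b * c + a ^ 4 * d ^ 4) * h2
    have htarget : e ^ 4 * (f + (d / c) ^ 4)⁻¹ + (a / c) ^ 4 ≠ 0 := by
      rw [hgid]; exact div_ne_zero hnum hden
    have R4 := RRv_trans P (a / c) _ hx3 htarget R3
    rwa [hgid] at R4

end Mobius2

section Bridge
variable {k K : Type*} [Field k] [Field K] [Algebra k K] (P : Place k K)
  [CharP K 2] [IsAlgClosed k] [CharP k 2]

lemma PTX_RR_of_PT (f : K) (hPT : PseudoTameAt P f) : RRv P f := by
  obtain ⟨t, htdef, h, hh, hne, hodd⟩ := hPT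
  rcases htdef with ⟨hvf, cc, htc, ht0, hvt⟩ | ⟨hvf, hti⟩
  · left
    obtain ⟨γ, hγ⟩ := IsAlgClosed.exists_pow_nat_eq cc (n := 4) (by norm_num)
    have hmap : (algebraMap k K γ) ^ 4 = algebraMap k K cc := by rw [← map_pow, hγ]
    set w := h + algebraMap k K γ with hwdef
    have hrw : f + w ^ 4 = t + h ^ 4 := by
      rw [hwdef, PTX_pow4_add, hmap, htc]
      have h2 : algebraMap k K cc + algebraMap k K cc = 0 := CharTwo.add_self_eq_zero _
      linear_combination h2
    refine ⟨w, ?_, by rw [hrw]; exact hne, by rw [hrw]; exact hodd⟩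
    by_cases hw0 : w = 0
    · exact Or.inl hw0
    right
    by_cases hγ0 : γ = 0
    · rw [hwdef, hγ0, map_zero, add_zero]
      rcases hh with rfl | h'
      · exact absurd (by rw [hwdef, hγ0, map_zero, add_zero]) hw0
      · exact h'
    by_cases hh0 : h = 0
    · rw [hwdef, hh0, zero_add, P.v_const _ hγ0]
    · exact PTX_v_add_pos' P 0 h (algebraMap k K γ) (Or.inr (hh.resolve_left hh0))
        (Or.inr (by rw [P.v_const _ hγ0])) (by rw [← hwdef]; exact hw0)
  · right
    rw [hti] at hne hodd
    exact ⟨h, hh, hne, hodd⟩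

lemma PTX_PT_of_RR (hK : IsFunctionFieldOneVar k K) (f : K)
    (hf : ∀ y : K, y ^ 2 ≠ f) (hR : RRv P f) : PseudoTameAt P f := by
  have hf0 : f ≠ 0 := fun h0 => hf 0 (by rw [h0]; ring)
  rcases lt_or_ge (P.v f) 0 with hvf | hvf
  · -- pole case
    have hfi : f⁻¹ ≠ 0 := inv_ne_zero hf0
    have hQ : QQ P f⁻¹ := by
      rcases hR with h | h
      · rcases QQ_cases P hf0 h with hodd | ⟨hh, hh0, hvh, hveq, _, _, _⟩
        · refine QQ_of_odd P hfi ?_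
          rw [PTX_v_inv _ _ hf0]
          rcases hodd with ⟨m, hm⟩; exact ⟨-m - 1, by omega⟩
        · omega
      · exact h
    obtain ⟨h, hh, hne, hodd⟩ := hQ
    exact ⟨f⁻¹, Or.inr ⟨hvf, rfl⟩, h, hh, hne, hodd⟩
  · -- regular case
    have hQ : QQ P f := by
      rcases hR with h | h
      · exact h
      · rcases lt_or_eq_of_le hvf with hvpos | hv0
        · rcases QQ_cases P (inv_ne_zero hf0) h with hodd | ⟨hh, hh0, hvh, hveq, _, _, _⟩
          · refine QQ_of_odd P hf0 ?_
            rw [PTX_v_inv _ _ hf0] at hodd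
            rcases hodd with ⟨m, hm⟩; exact ⟨-m - 1, by omega⟩
          · rw [PTX_v_inv _ _ hf0] at hveq; omega
        · exact PTX_QQ_inv_unit P f hf0 hv0.symm h
    obtain ⟨h, hh, hne, hodd⟩ := hQ
    have hh4 : h ^ 4 = 0 ∨ 0 ≤ P.v (h ^ 4) := by
      rcases hh with rfl | hvh
      · left; rw [zero_pow]; norm_num
      · by_cases hh0 : h = 0
        · left; rw [hh0, zero_pow]; norm_num
        · right; rw [PTX_v_pow _ _ hh0]; push_cast; positivity
    have hvfh : 0 < P.v (f + h ^ 4) := by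
      have hge : 0 ≤ P.v (f + h ^ 4) :=
        PTX_v_add_pos' P 0 f (h ^ 4) (Or.inr hvf) hh4 hne
      rcases hodd with ⟨m, hm⟩; omega
    by_cases hh0 : h = 0
    · have hvf' : 0 < P.v f := by
        rw [hh0] at hvfh
        simpa using hvfh
      exact ⟨f, Or.inl ⟨hvf, 0, by rw [map_zero, sub_zero], hf0, hvf'⟩, h, hh, hne, hodd⟩
    have hvh : 0 ≤ P.v h := hh.resolve_left hh0
    have hvh4 : P.v (h ^ 4) = 4 * P.v h := by
      rw [PTX_v_pow _ _ hh0]; push_cast; ring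
    rcases lt_or_eq_of_le hvh with hvhpos | hvh0
    · -- c = 0 works
      have hide : (f + h ^ 4) + h ^ 4 = f := by
        have := CharTwo.add_self_eq_zero (R := K) (h ^ 4)
        linear_combination this
      have hvf' : 0 < P.v f := by
        rw [← hide]
        have h1 : (1:ℤ) ≤ P.v ((f + h ^ 4) + h ^ 4) :=
          PTX_v_add_pos' P 1 _ _ (Or.inr (by omega)) (Or.inr (by omega))
            (by rw [hide]; exact hf0)
        omega
      exact ⟨f, Or.inl ⟨hvf, 0, by rw [map_zero, sub_zero], hf0, hvf'⟩, h, hh, hne, hodd⟩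
    · -- v h = 0 : use the residue of h
      obtain ⟨γ, hγspec⟩ := PTX_exists_residue P hK h hh0 (by omega)
      have hγ4 : (algebraMap k K γ) ^ 4 = algebraMap k K (γ ^ 4) := by rw [map_pow]
      have ht0 : f - algebraMap k K (γ ^ 4) ≠ 0 := by
        intro h0
        apply hf (algebraMap k K (γ ^ 2))
        have : f = algebraMap k K (γ ^ 4) := by linear_combination h0
        rw [this, ← map_pow]
        ring_nf
      rcases hγspec with heq | ⟨hγne, hγpos⟩
      · -- h is a constant
        have htf : f - algebraMap k K (γ ^ 4) = f + h ^ 4 := by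
          rw [heq, hγ4, CharTwo.sub_eq_add]
        refine ⟨f - algebraMap k K (γ ^ 4),
          Or.inl ⟨hvf, γ ^ 4, rfl, ht0, by rw [htf]; exact hvfh⟩, 0, Or.inl rfl, ?_, ?_⟩
        · rw [htf]; simpa using hne
        · rw [htf]
          have : f + h ^ 4 + 0 ^ 4 = f + h ^ 4 := by ring
          rw [this]; exact hodd
      · -- genuine residue
        set w := h - algebraMap k K γ with hwdef
        have hw4 : w ^ 4 = h ^ 4 + algebraMap k K (γ ^ 4) := by
          rw [hwdef, CharTwo.sub_eq_add, PTX_pow4_add, hγ4]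
        have htw : (f - algebraMap k K (γ ^ 4)) + w ^ 4 = f + h ^ 4 := by
          rw [hw4]; ring
        have hvt : 0 < P.v (f - algebraMap k K (γ ^ 4)) := by
          have hts : f - algebraMap k K (γ ^ 4) = (f + h ^ 4) + w ^ 4 := by
            have h2 := CharTwo.add_self_eq_zero (R := K) (w ^ 4)
            linear_combination htw - h2
          rw [hts]
          have hvw4 : P.v (w ^ 4) = 4 * P.v w := by
            rw [PTX_v_pow _ _ hγne]; push_cast; ring
          have h1 : (1:ℤ) ≤ P.v ((f + h ^ 4) + w ^ 4) :=
            PTX_v_add_pos' P 1 _ _ (Or.inr (by omega)) (Or.inr (by omega))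
              (by rw [← hts]; exact ht0)
          omega
        refine ⟨f - algebraMap k K (γ ^ 4),
          Or.inl ⟨hvf, γ ^ 4, rfl, ht0, hvt⟩, w, Or.inr (le_of_lt hγpos), ?_, ?_⟩
        · rw [htw]; exact hne
        · rw [htw]; exact hodd

end Bridge


/-- Pseudo-tameness at a place is invariant under the action of `Γ = PGL₂(K⁴)`
by fractional linear transformations. -/
theorem pseudoTame_Gamma_invariant
    (k K : Type*) [Field k] [IsAlgClosed k] [CharP k 2] [Field K] [Algebra k K]
    (hK : IsFunctionFieldOneVar k K) (P : Place k K)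
    (f : K) (hf : ∀ y : K, y ^ 2 ≠ f)
    (a b c d : K) (habcd : a * d ≠ b * c) :
    PseudoTameAt P f ↔
      PseudoTameAt P ((a ^ 4 * f + b ^ 4) / (c ^ 4 * f + d ^ 4)) := by
  haveI : CharP K 2 := charP_of_injective_algebraMap (algebraMap k K).injective 2
  have h2 : (2 : K) = 0 := CharTwo.two_eq_zero
  obtain ⟨hden, hnum, hg⟩ := PTX_H_mobius f hf a b c d habcd
  constructor
  · intro hPT
    exact PTX_PT_of_RR P hK _ hg
      (PTX_RR_mobius P f hf a b c d habcd (PTX_RR_of_PT P f hPT))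
  · intro hPT
    set g := (a ^ 4 * f + b ^ 4) / (c ^ 4 * f + d ^ 4) with hgdef
    have habcd' : d * a ≠ b * c := by rwa [mul_comm d a]
    have hdet : a * d + b * c ≠ 0 := by
      intro h0
      apply habcd
      have : a * d = -(b * c) := by linear_combination h0
      rw [this, CharTwo.neg_eq]
    have hdet4 : (a * d + b * c) ^ 4 ≠ 0 := pow_ne_zero _ hdet
    have e1 : c ^ 4 * g + a ^ 4 = (a * d + b * c) ^ 4 / (c ^ 4 * f + d ^ 4) := by
      rw [hgdef, eq_div_iff hden]
      field_simp
      linear_combination (-(2 * c * a ^ 3 * b * d ^ 3) - 3 * c ^ 2 * a ^ 2 * b ^ 2 * d ^ 2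
        - 2 * c ^ 3 * a * b ^ 3 * d + c ^ 4 * a ^ 4 * f) * h2
    have e2 : d ^ 4 * g + b ^ 4 = (a * d + b * c) ^ 4 * f / (c ^ 4 * f + d ^ 4) := by
      rw [hgdef, eq_div_iff hden]
      field_simp
      rw [mul_add, mul_div_cancel₀ _ (by rwa [mul_comm f] : f * c ^ 4 + d ^ 4 ≠ 0)]
      linear_combination (-(2 * d * a * f * b ^ 3 * c ^ 3) - 3 * d ^ 2 * a ^ 2 * f * b ^ 2 * c ^ 2
        - 2 * d ^ 3 * a ^ 3 * f * b * c + d ^ 4 * b ^ 4) * h2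
    have hback : (d ^ 4 * g + b ^ 4) / (c ^ 4 * g + a ^ 4) = f := by
      have hY : (a * d + b * c) ^ 4 / (c ^ 4 * f + d ^ 4) ≠ 0 := div_ne_zero hdet4 hden
      rw [e2, e1, div_eq_iff hY]
      ring
    have hR : RRv P ((d ^ 4 * g + b ^ 4) / (c ^ 4 * g + a ^ 4)) :=
      PTX_RR_mobius P g hg d b c a habcd' (PTX_RR_of_PT P g hPT)
    rw [hback] at hR
    exact PTX_PT_of_RR P hK f hf hR
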